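/- Suppose X is a Banach space and there is a constant K such that every finite rank operator u : X → X satisfies π₁(u) ≤ K‖u‖. Then for every Banach space embedding of ℓ_q into X with q > 2 one obtains a contradiction; i.e., if ℓ_q (q > 2) embeds isomorphically into X, then there is no constant K with π₁(u) ≤ K‖u‖ for all finite rank u : X → X. -/

import Mathlib

open scoped BigOperators
noncomputable section

/-- `sup { (∑ |ξ(xᵢ)|^p)^{1/p} : ξ ∈ X*, ‖ξ‖ ≤ 1 }`. -/
def weakLpNorm (p : ℝ) {X : Type*} [NormedAddCommGroup X] [NormedSpace ℝ X]
    {n : ℕ} (x : Fin n → X) : ℝ :=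
  ⨆ ξ : {ξ : X →L[ℝ] ℝ // ‖ξ‖ ≤ 1}, (∑ i, |ξ.1 (x i)| ^ p) ^ (1/p)

/-- `u` is `(q,p)`-summing with constant `C`. -/
def IsQPSummingWith (q p : ℝ) {X Y : Type*} [NormedAddCommGroup X] [NormedSpace ℝ X]
    [NormedAddCommGroup Y] [NormedSpace ℝ Y] (u : X →L[ℝ] Y) (C : ℝ) : Prop :=
  ∀ (n : ℕ) (x : Fin n → X), (∑ i, ‖u (x i)‖ ^ q) ^ (1/q) ≤ C * weakLpNorm p x

/-- The `(q,p)`-summing norm `π_{q,p}(u)`. -/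
def piQP (q p : ℝ) {X Y : Type*} [NormedAddCommGroup X] [NormedSpace ℝ X]
    [NormedAddCommGroup Y] [NormedSpace ℝ Y] (u : X →L[ℝ] Y) : ℝ :=
  sInf {C | 0 ≤ C ∧ IsQPSummingWith q p u C}

/-- A bounded operator has finite rank if its range is finite dimensional. -/
def FiniteRank {X Y : Type*} [NormedAddCommGroup X] [NormedSpace ℝ X]
    [NormedAddCommGroup Y] [NormedSpace ℝ Y] (u : X →L[ℝ] Y) : Prop :=
  FiniteDimensional ℝ (LinearMap.range (u : X →ₗ[ℝ] Y))

/-- Property (P): every finite rank operator factors as a norm-convergent sum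
`u = ∑ vₙ ∘ wₙ` of products of finite rank operators with `∑ ‖vₙ‖‖wₙ‖ ≤ C‖u‖`. -/
def PropertyP (X : Type*) [NormedAddCommGroup X] [NormedSpace ℝ X] : Prop :=
  ∃ C : ℝ, ∀ u : X →L[ℝ] X, FiniteRank u →
    ∃ v w : ℕ → X →L[ℝ] X, (∀ n, FiniteRank (v n)) ∧ (∀ n, FiniteRank (w n)) ∧
      HasSum (fun n => (v n).comp (w n)) u ∧
      Summable (fun n => ‖v n‖ * ‖w n‖) ∧
      ∑' n, ‖v n‖ * ‖w n‖ ≤ C * ‖u‖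

/-- The Rademacher functions on `[0,1]`. -/
def rademacher (n : ℕ) (t : ℝ) : ℝ := (-1 : ℝ) ^ ⌊(2 : ℝ) ^ (n + 1) * t⌋

/-- `X` has cotype `q` with constant `C`. -/
def HasCotypeWith (q : ℝ) (X : Type*) [NormedAddCommGroup X] [NormedSpace ℝ X]
    (C : ℝ) : Prop :=
  ∀ (n : ℕ) (x : Fin n → X),
    (∑ i, ‖x i‖ ^ q) ^ (1/q) ≤
      C * (∫ t in (0:ℝ)..1, ‖∑ i, rademacher i.1 t • x i‖ ^ 2) ^ (1/(2:ℝ))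


section Aux

variable {X : Type*} [NormedAddCommGroup X] [NormedSpace ℝ X]

private lemma aux_norm_sum_single (q : ℝ) (hq0 : 0 < q) [Fact (1 ≤ ENNReal.ofReal q)]
    (n : ℕ) (a : ℕ → ℝ) :
    ‖∑ m ∈ Finset.range n, lp.single (E := fun _ : ℕ => ℝ) (ENNReal.ofReal q) m (a m)‖
      = (∑ m ∈ Finset.range n, |a m| ^ q) ^ (1/q) := by
  have hptr : (ENNReal.ofReal q).toReal = q := ENNReal.toReal_ofReal hq0.le
  have hptr0 : 0 < (ENNReal.ofReal q).toReal := by rw [hptr]; exact hq0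
  have h := lp.norm_sum_single (E := fun _ : ℕ => ℝ) hptr0 a (Finset.range n)
  rw [hptr] at h
  simp only [Real.norm_eq_abs] at h
  rw [← h, ← Real.rpow_mul (norm_nonneg _), mul_one_div_cancel hq0.ne', Real.rpow_one]

private lemma aux_coord (q : ℝ) (hq0 : 0 < q) [Fact (1 ≤ ENNReal.ofReal q)]
    (j : lp (fun _ : ℕ => ℝ) (ENNReal.ofReal q) →L[ℝ] X)
    (c : ℝ) (hc : 0 < c) (hjc : ∀ x, c * ‖x‖ ≤ ‖j x‖) :
    ∀ i : ℕ, ∃ g : X →L[ℝ] ℝ,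
      (∀ y : lp (fun _ : ℕ => ℝ) (ENNReal.ofReal q), g (j y) = y i) ∧ ‖g‖ ≤ c⁻¹ := by
  set p : ENNReal := ENNReal.ofReal q with hp
  have hp0 : p ≠ 0 := by simp [hp, ENNReal.ofReal_eq_zero]; linarith
  have hcinv : (0:ℝ) ≤ c⁻¹ := by positivity
  have hinj : Function.Injective j := by
    intro a b hab
    have h := hjc (a - b)
    rw [map_sub, hab, sub_self, norm_zero] at h
    have h2 : ‖a - b‖ ≤ 0 := by nlinarith [norm_nonneg (a - b)]
    have h3 := le_antisymm h2 (norm_nonneg _)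
    rwa [norm_eq_zero, sub_eq_zero] at h3
  intro i
  set jl := (j : lp (fun _ : ℕ => ℝ) p →ₗ[ℝ] X) with hjl
  have hinj' : Function.Injective jl := hinj
  set eqv := LinearEquiv.ofInjective jl hinj' with heqv
  let coord : lp (fun _ : ℕ => ℝ) p →ₗ[ℝ] ℝ :=
    { toFun := fun y => y i
      map_add' := fun a b => by simp [lp.coeFn_add]
      map_smul' := fun r a => by simp [lp.coeFn_smul] }
  let Φ : LinearMap.range jl →ₗ[ℝ] ℝ := coord.comp eqv.symm.toLinearMap
  have hsymm : ∀ z : LinearMap.range jl, jl (eqv.symm z) = (z : X) := by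
    intro z
    exact LinearEquiv.ofInjective_symm_apply (f := jl) (h := hinj') z
  have hbound : ∀ z : LinearMap.range jl, ‖Φ z‖ ≤ c⁻¹ * ‖z‖ := by
    intro z
    have h1 : ‖Φ z‖ ≤ ‖eqv.symm z‖ := by
      have h := lp.norm_apply_le_norm hp0 (eqv.symm z) i
      exact h
    have h2 : c * ‖eqv.symm z‖ ≤ ‖(z : X)‖ := by
      have h := hjc (eqv.symm z)
      rwa [← ContinuousLinearMap.coe_coe j, ← hjl, hsymm z] at h
    have h3 : ‖(z : X)‖ = ‖z‖ := rfl
    rw [h3] at h2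
    have hci : 0 < c⁻¹ := by positivity
    nlinarith [mul_inv_cancel₀ hc.ne', norm_nonneg (eqv.symm z)]
  obtain ⟨g, hgext, hgnorm⟩ :=
    exists_extension_norm_eq (LinearMap.range jl) (Φ.mkContinuous c⁻¹ hbound)
  refine ⟨g, ?_, ?_⟩
  · intro y
    have hz : j y ∈ LinearMap.range jl := ⟨y, rfl⟩
    have h4 : eqv.symm ⟨j y, hz⟩ = y := by
      apply hinj'
      rw [hsymm ⟨j y, hz⟩]
      rfl
    have h5 := hgext ⟨j y, hz⟩
    simp only [LinearMap.mkContinuous_apply] at h5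
    rw [h5]
    simp [Φ, coord, h4]
    rfl
  · rw [hgnorm]
    exact LinearMap.mkContinuous_norm_le Φ hcinv hbound

end Aux

set_option maxHeartbeats 1000000

/-- if `ℓ_q` (q > 2) embeds isomorphically into `X`, there is no
constant `K` with `π₁(u) ≤ K‖u‖` for all finite rank `u : X → X`. -/
theorem no_uniform_one_summing_of_lq_embeds (X : Type*) [NormedAddCommGroup X]
    [NormedSpace ℝ X] (q : ℝ) (hq : 2 < q) [Fact (1 ≤ ENNReal.ofReal q)]
    (hembed : ∃ j : lp (fun _ : ℕ => ℝ) (ENNReal.ofReal q) →L[ℝ] X,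
      ∃ c > (0:ℝ), ∀ x, c * ‖x‖ ≤ ‖j x‖) :
    ¬ ∃ K : ℝ, ∀ u : X →L[ℝ] X, FiniteRank u → IsQPSummingWith 1 1 u (K * ‖u‖) := by
  rintro ⟨K, hK⟩
  obtain ⟨j, c, hc, hjc⟩ := hembed
  set p : ENNReal := ENNReal.ofReal q with hp
  have hq0 : (0:ℝ) < q := by linarith
  have hptr : p.toReal = q := ENNReal.toReal_ofReal hq0.le
  have hptr0 : 0 < p.toReal := by rw [hptr]; exact hq0
  have hcinv : (0:ℝ) ≤ c⁻¹ := by positivity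
  have hjn : (0:ℝ) ≤ ‖j‖ := norm_nonneg _
  choose g hg1 hg2 using aux_coord q hq0 j c hc hjc
  set e : ℕ → lp (fun _ : ℕ => ℝ) p := fun i => lp.single p i (1:ℝ) with he
  have hne : ∀ i, ‖e i‖ = 1 := by
    intro i
    have h := lp.norm_single (E := fun _ : ℕ => ℝ) (ENNReal.toReal_pos_iff.mp hptr0).1 i (1:ℝ)
    simpa using h
  set x : ℕ → X := fun i => j (e i) with hx
  have hxc : ∀ i, c ≤ ‖x i‖ := fun i => by
    have h := hjc (e i); rwa [hne i, mul_one] at h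
  have hsingle_eq : ∀ (m : ℕ) (t : ℝ), lp.single p m t = t • e m := by
    intro m t
    rw [he]
    simp only [← lp.single_smul, smul_eq_mul, mul_one]
  set M : ℝ := K * ‖j‖ * ‖j‖ * c⁻¹ with hM
  have key : ∀ n : ℕ, 0 < n → c * n ≤ M * (n : ℝ) ^ ((2:ℝ)/q) := by
    intro n hn
    have hn0 : (0:ℝ) < n := Nat.cast_pos.mpr hn
    set u : X →L[ℝ] X := ∑ m ∈ Finset.range n, (g m).smulRight (x m) with hu
    have happ : ∀ z : X, u z = ∑ m ∈ Finset.range n, g m z • x m := by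
      intro z
      rw [hu, ContinuousLinearMap.sum_apply]
      exact Finset.sum_congr rfl fun m _ => ContinuousLinearMap.smulRight_apply ..
    have hux : ∀ m ∈ Finset.range n, u (x m) = x m := by
      intro m hm
      rw [happ]
      have hterm : ∀ k, g k (x m) • x k = ((e m : ∀ _ : ℕ, ℝ) k) • x k := by
        intro k
        rw [hx]
        simp only [hg1 k (e m)]
      calc ∑ k ∈ Finset.range n, g k (x m) • x k
          = ∑ k ∈ Finset.range n, ((e m : ∀ _ : ℕ, ℝ) k) • x k :=
            Finset.sum_congr rfl fun k _ => hterm k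
        _ = x m := by
            rw [Finset.sum_eq_single_of_mem m hm]
            · rw [he]; simp [lp.single_apply_self]
            · intro k _ hk
              rw [he]
              simp only
              rw [lp.single_apply_ne (E := fun _ : ℕ => ℝ) p m (1:ℝ) hk, zero_smul]
    have hfr : FiniteRank u := by
      have hle : LinearMap.range (u : X →ₗ[ℝ] X) ≤
          Submodule.span ℝ (x '' ↑(Finset.range n)) := by
        rintro _ ⟨z, rfl⟩
        have h : (u : X →ₗ[ℝ] X) z = ∑ m ∈ Finset.range n, g m z • x m := by
          rw [ContinuousLinearMap.coe_coe]; exact happ z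
        rw [h]
        refine Submodule.sum_mem _ fun m hm => Submodule.smul_mem _ _ ?_
        exact Submodule.subset_span ⟨m, by simpa using hm, rfl⟩
      have hfd : FiniteDimensional ℝ (Submodule.span ℝ (x '' ↑(Finset.range n))) :=
        FiniteDimensional.span_of_finite ℝ ((Finset.range n).finite_toSet.image x)
      exact Submodule.finiteDimensional_of_le hle
    have hrecover : ∀ a : ℝ, 0 ≤ a → (a ^ q) ^ (1/q) = a := by
      intro a ha
      rw [← Real.rpow_mul ha, mul_one_div_cancel hq0.ne', Real.rpow_one]
    set W : ℝ := ‖j‖ * (n:ℝ) ^ ((1:ℝ)/q) with hW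
    have hWnn : 0 ≤ W := by positivity
    -- norm bound on u
    have hunorm : ‖u‖ ≤ W * c⁻¹ := by
      refine ContinuousLinearMap.opNorm_le_bound u (by positivity) fun z => ?_
      have hfac : u z = j (∑ m ∈ Finset.range n, lp.single p m (g m z)) := by
        rw [map_sum, happ]
        refine Finset.sum_congr rfl fun m _ => ?_
        rw [hsingle_eq m (g m z), map_smul, hx]
      have hS : ‖∑ m ∈ Finset.range n, lp.single p m (g m z)‖
          = (∑ m ∈ Finset.range n, |g m z| ^ q) ^ (1/q) :=
        aux_norm_sum_single q hq0 n _
      have hgz : ∀ m, |g m z| ≤ c⁻¹ * ‖z‖ := by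
        intro m
        calc |g m z| = ‖g m z‖ := (Real.norm_eq_abs _).symm
          _ ≤ ‖g m‖ * ‖z‖ := (g m).le_opNorm z
          _ ≤ c⁻¹ * ‖z‖ := by
              have := hg2 m
              nlinarith [norm_nonneg z]
      have hDnn : (0:ℝ) ≤ c⁻¹ * ‖z‖ := by positivity
      have hsumle : ∑ m ∈ Finset.range n, |g m z| ^ q ≤ (n : ℝ) * (c⁻¹ * ‖z‖) ^ q := by
        calc ∑ m ∈ Finset.range n, |g m z| ^ q
            ≤ ∑ m ∈ Finset.range n, (c⁻¹ * ‖z‖) ^ q :=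
              Finset.sum_le_sum fun m _ =>
                Real.rpow_le_rpow (abs_nonneg _) (hgz m) hq0.le
          _ = (n : ℝ) * (c⁻¹ * ‖z‖) ^ q := by
              rw [Finset.sum_const, Finset.card_range, nsmul_eq_mul]
      have hSle : ‖∑ m ∈ Finset.range n, lp.single p m (g m z)‖
          ≤ (n:ℝ) ^ ((1:ℝ)/q) * (c⁻¹ * ‖z‖) := by
        rw [hS]
        calc (∑ m ∈ Finset.range n, |g m z| ^ q) ^ (1/q)
            ≤ ((n : ℝ) * (c⁻¹ * ‖z‖) ^ q) ^ (1/q) :=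
              Real.rpow_le_rpow
                (Finset.sum_nonneg fun m _ => Real.rpow_nonneg (abs_nonneg _) q)
                hsumle (by positivity)
          _ = (n:ℝ) ^ ((1:ℝ)/q) * (c⁻¹ * ‖z‖) := by
              rw [Real.mul_rpow (le_of_lt hn0) (Real.rpow_nonneg hDnn q),
                hrecover _ hDnn]
      calc ‖u z‖ = ‖j (∑ m ∈ Finset.range n, lp.single p m (g m z))‖ := by rw [hfac]
        _ ≤ ‖j‖ * ‖∑ m ∈ Finset.range n, lp.single p m (g m z)‖ := j.le_opNorm _
        _ ≤ ‖j‖ * ((n:ℝ) ^ ((1:ℝ)/q) * (c⁻¹ * ‖z‖)) := by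
            exact mul_le_mul_of_nonneg_left hSle hjn
        _ = W * c⁻¹ * ‖z‖ := by rw [hW]; ring
    -- weak norm bound
    have hweak : weakLpNorm 1 (fun i : Fin n => x i.1) ≤ W := by
      refine Real.iSup_le (fun ξ => ?_) hWnn
      have h1 : (∑ i : Fin n, |ξ.1 (x i.1)| ^ (1:ℝ)) ^ (1/(1:ℝ))
          = ∑ i : Fin n, |ξ.1 (x i.1)| := by
        norm_num
      rw [h1]
      set ε : ℕ → ℝ := fun m => if 0 ≤ ξ.1 (x m) then 1 else -1 with hε
      have hεabs : ∀ m : ℕ, |ξ.1 (x m)| = ε m * ξ.1 (x m) := by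
        intro m
        by_cases h : 0 ≤ ξ.1 (x m)
        · simp [hε, h, abs_of_nonneg h]
        · simp [hε, h, abs_of_neg (lt_of_not_ge h)]
      have hεone : ∀ m : ℕ, |ε m| = 1 := by
        intro m
        by_cases h : 0 ≤ ξ.1 (x m) <;> simp [hε, h]
      have h2 : ∑ i : Fin n, |ξ.1 (x i.1)| = ∑ m ∈ Finset.range n, ε m * ξ.1 (x m) := by
        rw [← Fin.sum_univ_eq_sum_range (fun m => ε m * ξ.1 (x m)) n]
        exact Finset.sum_congr rfl fun i _ => hεabs i.1
      have hSnorm : ‖∑ m ∈ Finset.range n, lp.single p m (ε m)‖ = (n:ℝ) ^ ((1:ℝ)/q) := by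
        rw [aux_norm_sum_single q hq0 n ε]
        have : ∀ m ∈ Finset.range n, |ε m| ^ q = 1 := by
          intro m _
          rw [hεone m, Real.one_rpow]
        rw [Finset.sum_congr rfl this, Finset.sum_const, Finset.card_range,
          nsmul_eq_mul, mul_one]
      have h3 : ∑ m ∈ Finset.range n, ε m * ξ.1 (x m)
          = ξ.1 (j (∑ m ∈ Finset.range n, lp.single p m (ε m))) := by
        rw [map_sum, map_sum]
        refine Finset.sum_congr rfl fun m _ => ?_
        rw [hsingle_eq m (ε m), map_smul, map_smul, smul_eq_mul, hx]
      rw [h2, h3]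
      calc ξ.1 (j (∑ m ∈ Finset.range n, lp.single p m (ε m)))
          ≤ ‖ξ.1 (j (∑ m ∈ Finset.range n, lp.single p m (ε m)))‖ := by
            rw [Real.norm_eq_abs]; exact le_abs_self _
        _ ≤ ‖ξ.1‖ * ‖j (∑ m ∈ Finset.range n, lp.single p m (ε m))‖ := ξ.1.le_opNorm _
        _ ≤ 1 * (‖j‖ * ‖∑ m ∈ Finset.range n, lp.single p m (ε m)‖) := by
            refine mul_le_mul ξ.2 (j.le_opNorm _) (norm_nonneg _) zero_le_one
        _ = ‖j‖ * (n:ℝ) ^ ((1:ℝ)/q) := by rw [one_mul, hSnorm]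
        _ = W := hW.symm
    -- apply the summing hypothesis
    have hsum := hK u hfr n (fun i : Fin n => x i.1)
    have hL : (∑ i : Fin n, ‖u (x i.1)‖ ^ (1:ℝ)) ^ (1/(1:ℝ)) = ∑ i : Fin n, ‖u (x i.1)‖ := by
      norm_num
    rw [hL] at hsum
    have hcn : c * n ≤ ∑ i : Fin n, ‖u (x i.1)‖ := by
      have hterm : ∀ i : Fin n, c ≤ ‖u (x i.1)‖ := by
        intro i
        rw [hux i.1 (Finset.mem_range.mpr i.2)]
        exact hxc i.1
      calc c * n = (Finset.univ : Finset (Fin n)).card • c := by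
            simp [nsmul_eq_mul, mul_comm]
        _ ≤ ∑ i : Fin n, ‖u (x i.1)‖ :=
            Finset.card_nsmul_le_sum _ _ _ fun i _ => hterm i
    have hwnn : 0 ≤ weakLpNorm 1 (fun i : Fin n => x i.1) := by
      refine Real.iSup_nonneg fun ξ => ?_
      exact Real.rpow_nonneg
        (Finset.sum_nonneg fun i _ => Real.rpow_nonneg (abs_nonneg _) _) _
    have hmain : c * n ≤ K * ‖u‖ * weakLpNorm 1 (fun i : Fin n => x i.1) :=
      hcn.trans hsum
    by_cases hKu : 0 ≤ K * ‖u‖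
    · have hKnn : 0 ≤ K := by
        by_contra hKneg
        push_neg at hKneg
        have hu0 : 0 < ‖u‖ := by
          rcases eq_or_lt_of_le (norm_nonneg u) with h | h
          · exfalso
            have hu00 : u = 0 := norm_eq_zero.mp h.symm
            have h0 := hux 0 (Finset.mem_range.mpr hn)
            rw [hu00] at h0
            simp only [ContinuousLinearMap.zero_apply] at h0
            have := hxc 0
            rw [← h0, norm_zero] at this
            linarith
          · exact h
        nlinarith
      calc c * n ≤ K * ‖u‖ * weakLpNorm 1 (fun i : Fin n => x i.1) := hmain
        _ ≤ K * ‖u‖ * W := mul_le_mul_of_nonneg_left hweak hKu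
        _ ≤ K * (W * c⁻¹) * W := by nlinarith [mul_nonneg hKnn hWnn]
        _ = M * ((n:ℝ) ^ ((1:ℝ)/q) * (n:ℝ) ^ ((1:ℝ)/q)) := by rw [hM, hW]; ring
        _ = M * (n:ℝ) ^ ((2:ℝ)/q) := by
            have h12 : (1:ℝ)/q + 1/q = 2/q := by ring
            rw [← Real.rpow_add hn0, h12]
    · exfalso
      push_neg at hKu
      nlinarith
  -- derive the contradiction
  have hα : (0:ℝ) < 1 - 2/q := by
    rw [sub_pos, div_lt_one hq0]; linarith
  set α : ℝ := 1 - 2/q with hαdef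
  set B : ℝ := max (M / c) 1 with hB
  have hB1 : (1:ℝ) ≤ B := le_max_right _ _
  have hBM : M / c ≤ B := le_max_left _ _
  obtain ⟨n, hnB⟩ := exists_nat_gt (B ^ (1/α))
  have hBα : (1:ℝ) ≤ B ^ (1/α) := Real.one_le_rpow hB1 (by positivity)
  have hn1 : (1:ℝ) < n := lt_of_le_of_lt hBα hnB
  have hnpos : 0 < n := by exact_mod_cast lt_trans zero_lt_one hn1
  have hn0 : (0:ℝ) < n := by linarith
  have hkey := key n hnpos
  -- from c * n ≤ M * n^(2/q) derive c * n^α ≤ M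
  have hsplit : (n:ℝ) = (n:ℝ) ^ α * (n:ℝ) ^ ((2:ℝ)/q) := by
    have hα1 : α + 2/q = 1 := by rw [hαdef]; ring
    rw [← Real.rpow_add hn0, hα1, Real.rpow_one]
  have hpow2 : (0:ℝ) < (n:ℝ) ^ ((2:ℝ)/q) := Real.rpow_pos_of_pos hn0 _
  have hcnα : c * (n:ℝ) ^ α ≤ M := by
    have h : c * ((n:ℝ) ^ α * (n:ℝ) ^ ((2:ℝ)/q)) ≤ M * (n:ℝ) ^ ((2:ℝ)/q) := by
      rw [← hsplit]; exact hkey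
    have h2 : c * (n:ℝ) ^ α * (n:ℝ) ^ ((2:ℝ)/q) ≤ M * (n:ℝ) ^ ((2:ℝ)/q) := by
      calc c * (n:ℝ) ^ α * (n:ℝ) ^ ((2:ℝ)/q)
          = c * ((n:ℝ) ^ α * (n:ℝ) ^ ((2:ℝ)/q)) := by ring
        _ ≤ M * (n:ℝ) ^ ((2:ℝ)/q) := h
    exact le_of_mul_le_mul_right h2 hpow2
  -- but n^α > B ≥ M/c, so c * n^α > M
  have hgt : B < (n:ℝ) ^ α := by
    have h := Real.rpow_lt_rpow (by positivity) hnB hα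
    rwa [← Real.rpow_mul (by positivity : (0:ℝ) ≤ B), one_div_mul_cancel hα.ne',
      Real.rpow_one] at h
  have hMcB : M ≤ c * B := by
    rw [hB]
    rcases le_max_iff.mp (le_refl (max (M/c) 1)) with h | h
    · calc M = c * (M / c) := by field_simp
        _ ≤ c * max (M/c) 1 := mul_le_mul_of_nonneg_left (le_max_left _ _) hc.le
    · calc M = c * (M / c) := by field_simp
        _ ≤ c * max (M/c) 1 := mul_le_mul_of_nonneg_left (le_max_left _ _) hc.le
  have : M < c * (n:ℝ) ^ α := by
    calc M ≤ c * B := hMcB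
      _ < c * (n:ℝ) ^ α := by exact mul_lt_mul_of_pos_left hgt hc
  linarith
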